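/- On a finite connected weighted graph X with nonempty boundary Γ and pairwise segregated boundary data φ_i : Γ → {0,1}, the minimizer of J(u) = ½ Σ_i ‖∇u_i‖² − Σ_{i<j} (∇u_i, ∇u_j) over the segregated admissible set K is unique. -/

import Mathlib

open Finset

noncomputable def lap {X : Type*} [Fintype X] (w : X → X → ℝ) (u : X → ℝ) (x : X) : ℝ :=
  ∑ y, w x y * (u x - u y)

noncomputable def din {X : Type*} [Fintype X] (w : X → X → ℝ) (u v : X → ℝ) : ℝ :=
  (1 / 2) * ∑ x, ∑ y, w x y * (u y - u x) * (v y - v x)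

noncomputable def Jseg {X : Type*} [Fintype X] (w : X → X → ℝ) {k : ℕ}
    (u : Fin k → X → ℝ) : ℝ :=
  (1 / 2) * ∑ i, din w (u i) (u i) -
    ∑ i, ∑ j ∈ Finset.univ.filter (fun j => i < j), din w (u i) (u j)

def Adm {X : Type*} {k : ℕ} (Γ : Set X) (φ : Fin k → X → ℝ) (u : Fin k → X → ℝ) : Prop :=
  (∀ i, ∀ x ∈ Γ, u i x = φ i x) ∧ (∀ i x, 0 ≤ u i x) ∧
    (∀ i j, i ≠ j → ∀ x, u i x * u j x = 0)

noncomputable def hat {X : Type*} [Fintype X] {k : ℕ} (u : Fin k → X → ℝ)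
    (i : Fin k) (x : X) : ℝ :=
  u i x - ∑ j ∈ Finset.univ.erase i, u j x


section helpers
variable {X : Type*} [Fintype X] (w : X → X → ℝ)

lemma din_symm (u v : X → ℝ) : din w u v = din w v u := by
  unfold din
  congr 1
  exact sum_congr rfl fun x _ => sum_congr rfl fun y _ => by ring

lemma din_lap (hsym : ∀ x y, w x y = w y x) (u v : X → ℝ) :
    din w u v = ∑ x, v x * lap w u x := by
  unfold din lap
  have e1 : ∑ x, ∑ y, w x y * (u y - u x) * (v y - v x)
      = (∑ x, ∑ y, w x y * (u y - u x) * v y) + ∑ x, ∑ y, w x y * (u x - u y) * v x := by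
    rw [← Finset.sum_add_distrib]
    refine sum_congr rfl fun x _ => ?_
    rw [← Finset.sum_add_distrib]
    exact sum_congr rfl fun y _ => by ring
  have e2 : ∑ x, ∑ y, w x y * (u y - u x) * v y = ∑ x, ∑ y, w x y * (u x - u y) * v x := by
    rw [Finset.sum_comm]
    exact sum_congr rfl fun x _ => sum_congr rfl fun y _ => by rw [hsym y x]
  have e3 : ∑ x, v x * (∑ y, w x y * (u x - u y)) = ∑ x, ∑ y, w x y * (u x - u y) * v x := by
    refine sum_congr rfl fun x _ => ?_
    rw [Finset.mul_sum]
    exact sum_congr rfl fun y _ => by ring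
  rw [e1, e2, e3]
  ring

lemma din_self_nonneg (hnn : ∀ x y, 0 ≤ w x y) (e : X → ℝ) : 0 ≤ din w e e := by
  unfold din
  have : (0:ℝ) ≤ ∑ x, ∑ y, w x y * (e y - e x) * (e y - e x) := by
    refine Finset.sum_nonneg fun x _ => Finset.sum_nonneg fun y _ => ?_
    rw [mul_assoc]
    exact mul_nonneg (hnn x y) (mul_self_nonneg _)
  linarith

lemma din_add_smul (a b : X → ℝ) (s : ℝ) :
    din w (fun y => a y + s * b y) (fun y => a y + s * b y)
      = din w a a + 2 * s * din w a b + s ^ 2 * din w b b := by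
  unfold din
  have e1 : ∑ x, ∑ y, w x y * ((a y + s * b y) - (a x + s * b x)) * ((a y + s * b y) - (a x + s * b x))
      = (∑ x, ∑ y, w x y * (a y - a x) * (a y - a x))
        + ((∑ x, ∑ y, (2 * s) * (w x y * (a y - a x) * (b y - b x)))
        + ∑ x, ∑ y, s ^ 2 * (w x y * (b y - b x) * (b y - b x))) := by
    rw [← Finset.sum_add_distrib, ← Finset.sum_add_distrib]
    refine sum_congr rfl fun x _ => ?_
    rw [← Finset.sum_add_distrib, ← Finset.sum_add_distrib]
    exact sum_congr rfl fun y _ => by ring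
  rw [e1]
  simp only [← Finset.mul_sum]
  ring

lemma din_add_smul_cross (a b c : X → ℝ) (s : ℝ) :
    din w (fun y => a y + s * c y) b = din w a b + s * din w c b := by
  unfold din
  have e1 : ∑ x, ∑ y, w x y * ((a y + s * c y) - (a x + s * c x)) * (b y - b x)
      = (∑ x, ∑ y, w x y * (a y - a x) * (b y - b x))
        + ∑ x, ∑ y, s * (w x y * (c y - c x) * (b y - b x)) := by
    rw [← Finset.sum_add_distrib]
    refine sum_congr rfl fun x _ => ?_
    rw [← Finset.sum_add_distrib]
    exact sum_congr rfl fun y _ => by ring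
  rw [e1]
  simp only [← Finset.mul_sum]
  ring

end helpers

section hats
variable {X : Type*} [Fintype X] {k : ℕ} (w : X → X → ℝ)

open scoped Classical in
lemma din_single (hsym : ∀ x y, w x y = w y x) (a : X → ℝ) (x : X) :
    din w a (fun y => if y = x then (1:ℝ) else 0) = lap w a x := by
  rw [din_lap w hsym]
  simp

lemma lap_hat (v : Fin k → X → ℝ) (l : Fin k) (x : X) :
    lap w (hat v l) x = lap w (v l) x - ∑ j ∈ Finset.univ.erase l, lap w (v j) x := by
  unfold lap hat
  have e1 : ∀ y, w x y * ((v l x - ∑ j ∈ Finset.univ.erase l, v j x)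
        - (v l y - ∑ j ∈ Finset.univ.erase l, v j y))
      = w x y * (v l x - v l y) - ∑ j ∈ Finset.univ.erase l, w x y * (v j x - v j y) := by
    intro y
    rw [← Finset.mul_sum, Finset.sum_sub_distrib]
    ring
  calc ∑ y, w x y * ((v l x - ∑ j ∈ Finset.univ.erase l, v j x)
        - (v l y - ∑ j ∈ Finset.univ.erase l, v j y))
      = ∑ y, (w x y * (v l x - v l y) - ∑ j ∈ Finset.univ.erase l, w x y * (v j x - v j y)) :=
        sum_congr rfl fun y _ => e1 y
    _ = (∑ y, w x y * (v l x - v l y)) - ∑ y, ∑ j ∈ Finset.univ.erase l, w x y * (v j x - v j y) :=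
        Finset.sum_sub_distrib _ _
    _ = _ := by rw [Finset.sum_comm]

lemma filter_split (l : Fin k) (g : Fin k → ℝ) :
    (∑ j ∈ Finset.univ.filter (fun j => l < j), g j)
      + ∑ i ∈ Finset.univ.filter (fun i => i < l), g i
      = ∑ m ∈ Finset.univ.erase l, g m := by
  rw [← Finset.sum_filter_add_sum_filter_not (Finset.univ.erase l) (fun m => l < m)]
  congr 1
  · apply Finset.sum_congr _ (fun _ _ => rfl)
    ext m
    simp only [Finset.mem_filter, Finset.mem_erase, Finset.mem_univ, and_true, true_and]
    constructor
    · exact fun h => ⟨ne_of_gt h, h⟩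
    · exact fun h => h.2
  · apply Finset.sum_congr _ (fun _ _ => rfl)
    ext m
    simp only [Finset.mem_filter, Finset.mem_erase, Finset.mem_univ, and_true, true_and, not_lt]
    constructor
    · exact fun h => ⟨ne_of_lt h, le_of_lt h⟩
    · exact fun h => lt_of_le_of_ne h.2 h.1

end hats

section perturb
variable {X : Type*} [Fintype X] {k : ℕ} (w : X → X → ℝ)

lemma Jseg_perturb (v : Fin k → X → ℝ) (l : Fin k) (e : X → ℝ) (s : ℝ) :
    Jseg w (fun i y => v i y + s * (if i = l then e y else 0))
      = Jseg w v
        + s * (din w (v l) e - ∑ j ∈ Finset.univ.erase l, din w (v j) e)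
        + s ^ 2 * ((1 / 2) * din w e e) := by
  unfold Jseg
  have hz : ∀ i, i ≠ l → (fun y => v i y + s * (if i = l then e y else 0)) = v i := by
    intro i hi; funext y; simp [hi]
  have hzl : (fun y => v l y + s * (if l = l then e y else 0)) = fun y => v l y + s * e y := by
    funext y; simp
  have diag : ∑ i, din w (fun y => v i y + s * (if i = l then e y else 0))
        (fun y => v i y + s * (if i = l then e y else 0))
      = (∑ i, din w (v i) (v i)) + (2 * s * din w (v l) e + s ^ 2 * din w e e) := by
    have : ∀ i : Fin k, i ∈ (Finset.univ : Finset (Fin k)) →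
        din w (fun y => v i y + s * (if i = l then e y else 0))
          (fun y => v i y + s * (if i = l then e y else 0))
        = din w (v i) (v i)
          + (if i = l then 2 * s * din w (v l) e + s ^ 2 * din w e e else 0) := by
      intro i _
      by_cases hi : i = l
      · subst hi
        rw [hzl, din_add_smul, if_pos rfl]
        ring
      · rw [hz i hi]
        simp [hi]
    rw [Finset.sum_congr rfl this, Finset.sum_add_distrib, Finset.sum_ite_eq' Finset.univ l]
    simp
  have offd : ∑ i, ∑ j ∈ Finset.univ.filter (fun j => i < j),
        din w (fun y => v i y + s * (if i = l then e y else 0))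
          (fun y => v j y + s * (if j = l then e y else 0))
      = (∑ i, ∑ j ∈ Finset.univ.filter (fun j => i < j), din w (v i) (v j))
        + s * ∑ m ∈ Finset.univ.erase l, din w (v m) e := by
    have key : ∀ i : Fin k, i ∈ (Finset.univ : Finset (Fin k)) →
        ∑ j ∈ Finset.univ.filter (fun j => i < j),
          din w (fun y => v i y + s * (if i = l then e y else 0))
            (fun y => v j y + s * (if j = l then e y else 0))
        = (∑ j ∈ Finset.univ.filter (fun j => i < j), din w (v i) (v j))
          + ((if i = l then ∑ j ∈ Finset.univ.filter (fun j => l < j), s * din w (v j) e else 0)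
             + (if i < l then s * din w (v i) e else 0)) := by
      intro i _
      by_cases hi : i = l
      · subst hi
        rw [if_pos rfl, if_neg (lt_irrefl _), add_zero, ← Finset.sum_add_distrib]
        refine Finset.sum_congr rfl fun j hj => ?_
        have hjl : j ≠ i := (ne_of_lt (Finset.mem_filter.mp hj).2).symm
        rw [hz j hjl, hzl, din_add_smul_cross]
        rw [din_symm w e (v j)]
      · rw [hz i hi, if_neg hi, zero_add]
        by_cases hil : i < l
        · rw [if_pos hil]
          have : l ∈ Finset.univ.filter (fun j => i < j) := by
            simp [hil]
          have h1 : ∑ j ∈ (Finset.univ.filter (fun j => i < j)).erase l,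
                din w (v i) (fun y => v j y + s * (if j = l then e y else 0))
              = ∑ j ∈ (Finset.univ.filter (fun j => i < j)).erase l, din w (v i) (v j) :=
            Finset.sum_congr rfl fun j hj => by rw [hz j (Finset.mem_erase.mp hj).1]
          have h2 : din w (v i) (fun y => v l y + s * (if l = l then e y else 0))
              = din w (v i) (v l) + s * din w (v i) e := by
            rw [hzl, din_symm, din_add_smul_cross, din_symm w (v l) (v i), din_symm w e (v i)]
          rw [← Finset.sum_erase_add _ _ this, ← Finset.sum_erase_add _ _ this, h1, h2]
          ring
        · rw [if_neg hil]
          rw [add_zero]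
          refine Finset.sum_congr rfl fun j hj => ?_
          have hij : i < j := (Finset.mem_filter.mp hj).2
          have hjl : j ≠ l := by
            intro h; subst h; exact hil hij
          rw [hz j hjl]
    rw [Finset.sum_congr rfl key]
    rw [Finset.sum_add_distrib, Finset.sum_add_distrib]
    rw [Finset.sum_ite_eq' Finset.univ l]
    simp only [Finset.mem_univ, if_true]
    congr 1
    rw [← Finset.sum_filter]
    rw [← Finset.mul_sum, ← Finset.mul_sum, ← mul_add, filter_split]
  rw [diag, offd]
  ring
end perturb

section hatalg
variable {X : Type*} [Fintype X] {k : ℕ}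

lemma hat_le (v : Fin k → X → ℝ) (hnn : ∀ i x, 0 ≤ v i x) (l : Fin k) (x : X) :
    hat v l x ≤ v l x := by
  unfold hat
  have : (0:ℝ) ≤ ∑ j ∈ Finset.univ.erase l, v j x :=
    Finset.sum_nonneg fun j _ => hnn j x
  linarith

lemma hat_eq_of_pos (v : Fin k → X → ℝ)
    (hseg : ∀ i j, i ≠ j → ∀ x, v i x * v j x = 0) (l : Fin k) (x : X)
    (hpos : 0 < v l x) : hat v l x = v l x := by
  unfold hat
  have : ∑ j ∈ Finset.univ.erase l, v j x = 0 := by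
    refine Finset.sum_eq_zero fun j hj => ?_
    have h := hseg j l (Finset.mem_erase.mp hj).1 x
    rcases mul_eq_zero.mp h with h | h
    · exact h
    · exact absurd h (ne_of_gt hpos)
  rw [this, sub_zero]

lemma hat_add_le (v : Fin k → X → ℝ) (hnn : ∀ i x, 0 ≤ v i x) {l b : Fin k}
    (hlb : l ≠ b) (x : X) : hat v l x + hat v b x ≤ 0 := by
  unfold hat
  have h1 : v b x ≤ ∑ j ∈ Finset.univ.erase l, v j x :=
    Finset.single_le_sum (fun j _ => hnn j x)
      (Finset.mem_erase.mpr ⟨hlb.symm, Finset.mem_univ _⟩)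
  have h2 : v l x ≤ ∑ j ∈ Finset.univ.erase b, v j x :=
    Finset.single_le_sum (fun j _ => hnn j x)
      (Finset.mem_erase.mpr ⟨hlb, Finset.mem_univ _⟩)
  linarith

lemma hat_eq_neg (v : Fin k → X → ℝ) (hnn : ∀ i x, 0 ≤ v i x)
    (hseg : ∀ i j, i ≠ j → ∀ x, v i x * v j x = 0) {l b : Fin k}
    (hlb : l ≠ b) (x : X) (hpos : 0 < v b x) : hat v l x = - v b x := by
  unfold hat
  have hvl : v l x = 0 := by
    have h := hseg l b hlb x
    rcases mul_eq_zero.mp h with h | h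
    · exact h
    · exact absurd h (ne_of_gt hpos)
  have hsum : ∑ j ∈ Finset.univ.erase l, v j x = v b x := by
    refine Finset.sum_eq_single_of_mem b
      (Finset.mem_erase.mpr ⟨hlb.symm, Finset.mem_univ _⟩) fun j _ hj => ?_
    have h := hseg j b hj x
    rcases mul_eq_zero.mp h with h | h
    · exact h
    · exact absurd h (ne_of_gt hpos)
  rw [hvl, hsum]
  ring

end hatalg

section EL
variable {X : Type*} [Fintype X] {k : ℕ} (w : X → X → ℝ)

open scoped Classical in
lemma EL (hsym : ∀ x y, w x y = w y x) (hnn : ∀ x y, 0 ≤ w x y)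
    (Γ : Set X) (φ : Fin k → X → ℝ)
    (v : Fin k → X → ℝ) (hv : Adm Γ φ v)
    (hmin : ∀ z : Fin k → X → ℝ, Adm Γ φ z → Jseg w v ≤ Jseg w z)
    (l : Fin k) (x : X) (hx : x ∉ Γ) (hothers : ∀ j, j ≠ l → v j x = 0) :
    (0 < v l x → lap w (hat v l) x = 0) ∧ (v l x = 0 → 0 ≤ lap w (hat v l) x) := by
  obtain ⟨hbd, hge, hseg⟩ := hv
  set e : X → ℝ := fun y => if y = x then (1:ℝ) else 0 with he
  set t₀ : ℝ := v l x with ht₀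
  set g : ℝ := lap w (hat v l) x with hg
  set c : ℝ := (1/2) * din w e e with hc
  have hc0 : 0 ≤ c := by
    have := din_self_nonneg w hnn e
    rw [hc]; linarith
  -- the key inequality from minimality
  have key : ∀ t : ℝ, 0 ≤ t → 0 ≤ (t - t₀) * g + (t - t₀)^2 * c := by
    intro t ht
    set z : Fin k → X → ℝ := fun i y => v i y + (t - t₀) * (if i = l then e y else 0) with hz
    have hzval : ∀ i y, z i y = if i = l ∧ y = x then t else v i y := by
      intro i y
      rw [hz]
      by_cases hi : i = l
      · by_cases hy : y = x
        · rw [hi, hy]; simp [he, ht₀]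
        · simp [hi, hy, he]
      · have : ¬ (i = l ∧ y = x) := fun h => hi h.1
        simp [hi, this]
    have hadm : Adm Γ φ z := by
      refine ⟨?_, ?_, ?_⟩
      · intro i y hy
        have hyx : y ≠ x := fun h => hx (h ▸ hy)
        rw [hzval]
        simp only [hyx, and_false, if_false]
        exact hbd i y hy
      · intro i y
        rw [hzval]
        by_cases h : i = l ∧ y = x
        · rw [if_pos h]; exact ht
        · rw [if_neg h]; exact hge i y
      · intro i j hij y
        rw [hzval, hzval]
        by_cases hy : y = x
        · subst hy
          by_cases hi : i = l
          · have hjl : j ≠ l := fun h => hij (hi.trans h.symm)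
            have hzj : (if j = l ∧ y = y then t else v j y) = 0 := by
              simp [hjl, hothers j hjl]
            rw [hzj, mul_zero]
          · have hzi : (if i = l ∧ y = y then t else v i y) = 0 := by
              simp [hi, hothers i hi]
            rw [hzi, zero_mul]
        · simp only [hy, and_false, if_false]
          exact hseg i j hij y
    have hle := hmin z hadm
    have hJ : Jseg w z = Jseg w v + (t - t₀) * g + (t - t₀)^2 * c := by
      rw [hz]
      rw [Jseg_perturb w v l e (t - t₀)]
      have hd : din w (v l) e - ∑ j ∈ Finset.univ.erase l, din w (v j) e = g := by
        rw [hg, lap_hat]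
        congr 1
        · exact (din_single w hsym (v l) x)
        · exact Finset.sum_congr rfl fun j _ => din_single w hsym (v j) x
      rw [hd, hc]
    rw [hJ] at hle
    linarith
  constructor
  · intro hpos
    by_contra hgne
    have habs : 0 < |g| := abs_pos.mpr hgne
    set δ : ℝ := min t₀ (|g| / (2 * c + 1)) with hδ
    have hδ0 : 0 < δ := lt_min hpos (div_pos habs (by linarith))
    have hδt : δ ≤ t₀ := min_le_left _ _
    have hδg : δ * (2 * c + 1) ≤ |g| := by
      have := min_le_right t₀ (|g| / (2 * c + 1))
      rw [hδ]
      calc min t₀ (|g| / (2 * c + 1)) * (2 * c + 1) ≤ (|g| / (2 * c + 1)) * (2 * c + 1) := by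
            apply mul_le_mul_of_nonneg_right this (by linarith)
        _ = |g| := by field_simp
    have e1 := key (t₀ + δ) (by linarith)
    have e2 := key (t₀ - δ) (by linarith)
    simp only [add_sub_cancel_left, sub_sub_cancel_left] at e1 e2
    rcases lt_or_gt_of_ne hgne with hgneg | hgpos
    · rw [abs_of_neg hgneg] at hδg
      nlinarith
    · rw [abs_of_pos hgpos] at hδg
      nlinarith
  · intro hzero
    by_contra hgneg
    push_neg at hgneg
    set δ : ℝ := (-g) / (2 * c + 1) with hδ
    have hδ0 : 0 < δ := div_pos (by linarith) (by linarith)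
    have e1 := key δ (by linarith)
    rw [hzero] at e1
    simp only [sub_zero] at e1
    have hδg : δ * (2 * c + 1) = -g := by rw [hδ]; field_simp
    nlinarith

end EL

section MP
variable {X : Type*} [Fintype X] {k : ℕ} (w : X → X → ℝ)

lemma HP (hsym : ∀ x y, w x y = w y x) (hnn : ∀ x y, 0 ≤ w x y)
    (Γ : Set X) (φ : Fin k → X → ℝ)
    (v : Fin k → X → ℝ) (hv : Adm Γ φ v)
    (hmin : ∀ z : Fin k → X → ℝ, Adm Γ φ z → Jseg w v ≤ Jseg w z)
    (l : Fin k) (x : X) (hx : x ∉ Γ) (hpos : 0 < v l x) :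
    lap w (hat v l) x = 0 := by
  have hothers : ∀ j, j ≠ l → v j x = 0 := by
    intro j hj
    rcases mul_eq_zero.mp (hv.2.2 j l hj x) with h | h
    · exact h
    · exact absurd h (ne_of_gt hpos)
  exact (EL w hsym hnn Γ φ v hv hmin l x hx hothers).1 hpos

lemma SH (hsym : ∀ x y, w x y = w y x) (hnn : ∀ x y, 0 ≤ w x y)
    (Γ : Set X) (φ : Fin k → X → ℝ)
    (v : Fin k → X → ℝ) (hv : Adm Γ φ v)
    (hmin : ∀ z : Fin k → X → ℝ, Adm Γ φ z → Jseg w v ≤ Jseg w z)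
    (l : Fin k) (x : X) (hx : x ∉ Γ) :
    0 ≤ lap w (hat v l) x := by
  by_cases hex : ∃ b, b ≠ l ∧ 0 < v b x
  · obtain ⟨b, hbl, hbpos⟩ := hex
    have h0 : lap w (hat v b) x = 0 := HP w hsym hnn Γ φ v hv hmin b x hx hbpos
    have hx2 : hat v l x = - hat v b x := by
      rw [hat_eq_neg v hv.2.1 hv.2.2 hbl.symm x hbpos, hat_eq_of_pos v hv.2.2 b x hbpos]
    have hterm : ∀ y, -(w x y * (hat v b x - hat v b y)) ≤ w x y * (hat v l x - hat v l y) := by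
      intro y
      have h1 : hat v l y + hat v b y ≤ 0 := hat_add_le v hv.2.1 hbl.symm y
      have h2 : -(hat v b x - hat v b y) ≤ hat v l x - hat v l y := by
        rw [hx2]; linarith
      calc -(w x y * (hat v b x - hat v b y)) = w x y * (-(hat v b x - hat v b y)) := by ring
        _ ≤ w x y * (hat v l x - hat v l y) := mul_le_mul_of_nonneg_left h2 (hnn x y)
    have : - lap w (hat v b) x ≤ lap w (hat v l) x := by
      unfold lap
      rw [← Finset.sum_neg_distrib]
      exact Finset.sum_le_sum fun y _ => hterm y
    rw [h0] at this
    linarith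
  · push_neg at hex
    have hothers : ∀ j, j ≠ l → v j x = 0 := by
      intro j hj
      exact le_antisymm (hex j hj) (hv.2.1 j x)
    rcases (hv.2.1 l x).lt_or_eq with h | h
    · rw [(EL w hsym hnn Γ φ v hv hmin l x hx hothers).1 h]
    · exact (EL w hsym hnn Γ φ v hv hmin l x hx hothers).2 h.symm

lemma prop_step (hnn : ∀ x y, 0 ≤ w x y) (u v : Fin k → X → ℝ) (M : ℝ) (l : Fin k) (z y : X)
    (hbound : ∀ y', hat u l y' - hat v l y' ≤ M)
    (hlapu : lap w (hat u l) z = 0) (hlapv : 0 ≤ lap w (hat v l) z)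
    (heq : hat u l z - hat v l z = M) (hzy : 0 < w z y) :
    hat u l y - hat v l y = M := by
  have hsum : ∑ y', w z y' * ((hat u l z - hat u l y') - (hat v l z - hat v l y')) ≤ 0 := by
    have e1 : ∑ y', w z y' * ((hat u l z - hat u l y') - (hat v l z - hat v l y'))
        = (∑ y', w z y' * (hat u l z - hat u l y')) - ∑ y', w z y' * (hat v l z - hat v l y') := by
      rw [← Finset.sum_sub_distrib]
      exact Finset.sum_congr rfl fun y' _ => by ring
    unfold lap at hlapu hlapv
    rw [e1, hlapu]
    linarith
  have hterm : ∀ y', 0 ≤ w z y' * ((hat u l z - hat u l y') - (hat v l z - hat v l y')) := by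
    intro y'
    apply mul_nonneg (hnn z y')
    have := hbound y'
    linarith [heq]
  have hzero := (Finset.sum_eq_zero_iff_of_nonneg (fun y' _ => hterm y')).mp
    (le_antisymm hsum (Finset.sum_nonneg fun y' _ => hterm y'))
  have hy := hzero y (Finset.mem_univ y)
  have h2 : (hat u l z - hat u l y) - (hat v l z - hat v l y) = 0 := by
    rcases mul_eq_zero.mp hy with h | h
    · exact absurd h (ne_of_gt hzy)
    · exact h
  linarith [heq]

end MP

section Main
variable {X : Type*} [Fintype X] {k : ℕ} (w : X → X → ℝ)

lemma step2 (hsym : ∀ x y, w x y = w y x) (hnn : ∀ x y, 0 ≤ w x y)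
    (Γ : Set X) (φ : Fin k → X → ℝ)
    (u v : Fin k → X → ℝ) (hu : Adm Γ φ u) (hv : Adm Γ φ v)
    (hminu : ∀ z : Fin k → X → ℝ, Adm Γ φ z → Jseg w u ≤ Jseg w z)
    (hminv : ∀ z : Fin k → X → ℝ, Adm Γ φ z → Jseg w v ≤ Jseg w z)
    (M : ℝ) (hM : 0 < M)
    (hbd1 : ∀ m y', hat u m y' - hat v m y' ≤ M)
    (hbd2 : ∀ m y', hat v m y' - hat u m y' ≤ M)
    (l : Fin k) (z y : X) (hz : z ∉ Γ)
    (heq : hat u l z - hat v l z = M) (hzy : 0 < w z y) :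
    ∃ m, hat u m y - hat v m y = M ∨ hat v m y - hat u m y = M := by
  by_cases hul : 0 < u l z
  · exact ⟨l, Or.inl (prop_step w hnn u v M l z y (fun y' => hbd1 l y')
      (HP w hsym hnn Γ φ u hu hminu l z hz hul)
      (SH w hsym hnn Γ φ v hv hminv l z hz) heq hzy)⟩
  · have hul0 : u l z = 0 := le_antisymm (not_lt.mp hul) (hu.2.1 l z)
    have hatu : hat u l z ≤ 0 := (hat_le u hu.2.1 l z).trans (le_of_eq hul0)
    have hvneg : hat v l z < 0 := by linarith
    have hsumpos : 0 < ∑ j ∈ Finset.univ.erase l, v j z := by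
      unfold hat at hvneg
      have := hv.2.1 l z
      linarith
    have hex : ∃ b ∈ Finset.univ.erase l, (0:ℝ) < v b z := by
      apply Finset.exists_lt_of_sum_lt
      simpa using hsumpos
    obtain ⟨b, hbmem, hbpos⟩ := hex
    have hbl : b ≠ l := (Finset.mem_erase.mp hbmem).1
    have hvl : hat v l z = - v b z := hat_eq_neg v hv.2.1 hv.2.2 hbl.symm z hbpos
    have hvb : hat v b z = v b z := hat_eq_of_pos v hv.2.2 b z hbpos
    have hub : hat u b z + hat u l z ≤ 0 := hat_add_le u hu.2.1 hbl z
    have hge : M ≤ hat v b z - hat u b z := by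
      rw [hvb]
      have h1 : hat u l z + v b z = M := by rw [← heq, hvl]; ring
      linarith
    have heq2 : hat v b z - hat u b z = M := le_antisymm (hbd2 b z) hge
    exact ⟨b, Or.inr (prop_step w hnn v u M b z y (fun y' => hbd2 b y')
      (HP w hsym hnn Γ φ v hv hminv b z hz hbpos)
      (SH w hsym hnn Γ φ u hu hminu b z hz) heq2 hzy)⟩

lemma eq_of_hat_eq (u v : Fin k → X → ℝ)
    (hnnu : ∀ i x, 0 ≤ u i x) (hsegu : ∀ i j, i ≠ j → ∀ x, u i x * u j x = 0)
    (hnnv : ∀ i x, 0 ≤ v i x) (hsegv : ∀ i j, i ≠ j → ∀ x, v i x * v j x = 0)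
    (hh : ∀ l x, hat u l x = hat v l x) : u = v := by
  funext i x
  by_cases hui : 0 < u i x
  · have h1 : hat u i x = u i x := hat_eq_of_pos u hsegu i x hui
    have h2 : hat v i x ≤ v i x := hat_le v hnnv i x
    have hvpos : 0 < v i x := by
      have := hh i x
      linarith
    have h3 : hat v i x = v i x := hat_eq_of_pos v hsegv i x hvpos
    have := hh i x
    linarith
  · have hu0 : u i x = 0 := le_antisymm (not_lt.mp hui) (hnnu i x)
    by_cases hvi : 0 < v i x
    · have h3 : hat v i x = v i x := hat_eq_of_pos v hsegv i x hvi
      have h4 : hat u i x ≤ u i x := hat_le u hnnu i x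
      have := hh i x
      linarith
    · have hv0 : v i x = 0 := le_antisymm (not_lt.mp hvi) (hnnv i x)
      rw [hu0, hv0]

end Main

theorem stmt_17 {X : Type*} [Fintype X] (w : X → X → ℝ)
    (hsym : ∀ x y, w x y = w y x) (hnn : ∀ x y, 0 ≤ w x y)
    (hconn : ∀ x y : X, Relation.ReflTransGen (fun a b => 0 < w a b) x y)
    (k : ℕ) (Γ : Set X) (hΓ : Γ.Nonempty) (φ : Fin k → X → ℝ)
    (hφ01 : ∀ i, ∀ x ∈ Γ, φ i x = 0 ∨ φ i x = 1)
    (hφseg : ∀ i j, i ≠ j → ∀ x ∈ Γ, φ i x * φ j x = 0)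
    (u v : Fin k → X → ℝ) (hu : Adm Γ φ u) (hv : Adm Γ φ v)
    (hminu : ∀ z : Fin k → X → ℝ, Adm Γ φ z → Jseg w u ≤ Jseg w z)
    (hminv : ∀ z : Fin k → X → ℝ, Adm Γ φ z → Jseg w v ≤ Jseg w z) :
    u = v := by
  by_cases hk : k = 0
  · subst hk
    funext i
    exact i.elim0
  · have hkpos : Nonempty (Fin k) := ⟨⟨0, Nat.pos_of_ne_zero hk⟩⟩
    have hX : Nonempty X := ⟨hΓ.choose⟩
    obtain ⟨p, -, hpmax⟩ := Finset.exists_max_image (Finset.univ : Finset (Fin k × X))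
      (fun q => |hat u q.1 q.2 - hat v q.1 q.2|) Finset.univ_nonempty
    set M : ℝ := |hat u p.1 p.2 - hat v p.1 p.2| with hMdef
    have hbd : ∀ m y, |hat u m y - hat v m y| ≤ M := fun m y => hpmax (m, y) (Finset.mem_univ _)
    rcases le_or_gt M 0 with hM | hM
    · apply eq_of_hat_eq u v hu.2.1 hu.2.2 hv.2.1 hv.2.2
      intro l x
      have h := le_antisymm ((hbd l x).trans hM) (abs_nonneg _)
      have := abs_eq_zero.mp h
      linarith [sub_eq_zero.mp this]
    · exfalso
      have hbd1 : ∀ m y, hat u m y - hat v m y ≤ M :=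
        fun m y => (le_abs_self _).trans (hbd m y)
      have hbd2 : ∀ m y, hat v m y - hat u m y ≤ M := by
        intro m y
        have := hbd m y
        rw [abs_sub_comm] at this
        exact (le_abs_self _).trans this
      have hΓhat : ∀ m γ, γ ∈ Γ → hat u m γ = hat v m γ := by
        intro m γ hγ
        unfold hat
        rw [hu.1 m γ hγ, hv.1 m γ hγ]
        congr 1
        exact Finset.sum_congr rfl fun j _ => (hu.1 j γ hγ).trans (hv.1 j γ hγ).symm
      have hnotΓ : ∀ z, (∃ m, hat u m z - hat v m z = M ∨ hat v m z - hat u m z = M) → z ∉ Γ := by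
        rintro z ⟨m, hm⟩ hz
        have h := hΓhat m z hz
        rcases hm with h' | h' <;> · rw [h] at h'; simp at h'; linarith
      have hstep : ∀ z y, (∃ m, hat u m z - hat v m z = M ∨ hat v m z - hat u m z = M) →
          0 < w z y → ∃ m, hat u m y - hat v m y = M ∨ hat v m y - hat u m y = M := by
        rintro z y ⟨m, hm⟩ hzy
        have hzΓ : z ∉ Γ := hnotΓ z ⟨m, hm⟩
        rcases hm with h | h
        · exact step2 w hsym hnn Γ φ u v hu hv hminu hminv M hM hbd1 hbd2 m z y hzΓ h hzy
        · obtain ⟨m', hm'⟩ := step2 w hsym hnn Γ φ v u hv hu hminv hminu M hM hbd2 hbd1 m z y hzΓ h hzy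
          exact ⟨m', hm'.symm⟩
      have hGood0 : ∃ m, hat u m p.2 - hat v m p.2 = M ∨ hat v m p.2 - hat u m p.2 = M := by
        refine ⟨p.1, ?_⟩
        rcases abs_eq (le_of_lt hM) |>.mp hMdef.symm with h | h
        · exact Or.inl h
        · exact Or.inr (by linarith)
      have hpath : ∀ z, Relation.ReflTransGen (fun a b => 0 < w a b) p.2 z →
          ∃ m, hat u m z - hat v m z = M ∨ hat v m z - hat u m z = M := by
        intro z hz
        induction hz with
        | refl => exact hGood0
        | tail h hr ih => exact hstep _ _ ih hr
      obtain ⟨γ, hγ⟩ := hΓ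
      exact hnotΓ γ (hpath γ (hconn p.2 γ)) hγ
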